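/- Let q = 2m + 1 with m ≥ 1 an integer, and let the design space Ω be the set of all nonzero vectors in {0,1}^q. Let p_odd be the design measure assigning mass n_{m+1}⁻¹, where n_{m+1} = C(q,m+1), to each design point with exactly m+1 ones and mass 0 to every other design point. Then for t ∈ [0,1), p_odd is A-optimal (H(p_odd) is invertible and tr{H(p_odd)}⁻¹ ≤ tr{H(p)}⁻¹ for every design measure p on Ω with H(p) invertible) if and only if 0 ≤ t ≤ q/(q+1). -/

import Mathlib

open Matrix BigOperators Finset

open Topology Filter

noncomputable section

/-- The binary design point (0/1 vector) with support `S`. -/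
def ind {q : ℕ} (S : Finset (Fin q)) : Fin q → ℝ := fun i => if i ∈ S then 1 else 0

/-- A design measure on the nonzero binary vectors of length `q`, indexed by
their supports: nonnegative masses summing to 1, with zero mass on the zero vector. -/
def designMeasureB {q : ℕ} (p : Finset (Fin q) → ℝ) : Prop :=
  p ∅ = 0 ∧ (∀ S, 0 ≤ p S) ∧ ∑ S : Finset (Fin q), p S = 1

/-- G(p) = Σ p_x x xᵀ. -/
def GmatB {q : ℕ} (p : Finset (Fin q) → ℝ) : Matrix (Fin q) (Fin q) ℝ :=
  ∑ S : Finset (Fin q), p S • Matrix.vecMulVec (ind S) (ind S)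

/-- g(p) = Σ p_x x. -/
def gvecB {q : ℕ} (p : Finset (Fin q) → ℝ) : Fin q → ℝ :=
  ∑ S : Finset (Fin q), p S • ind S

/-- H(p) = G(p) − t g(p) g(p)ᵀ. -/
def HmatB {q : ℕ} (t : ℝ) (p : Finset (Fin q) → ℝ) : Matrix (Fin q) (Fin q) ℝ :=
  GmatB p - t • Matrix.vecMulVec (gvecB p) (gvecB p)

/-- The all-ones q×q matrix J_q. -/
def Jmat (q : ℕ) : Matrix (Fin q) (Fin q) ℝ := Matrix.of fun _ _ => 1

end
noncomputable section

def Kmat (q : ℕ) (x y : ℝ) : Matrix (Fin q) (Fin q) ℝ := x • 1 + y • Jmat q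

lemma Kmat_apply (q : ℕ) (x y : ℝ) (i k : Fin q) :
    Kmat q x y i k = x * (if i = k then 1 else 0) + y := by
  simp [Kmat, Jmat, Matrix.one_apply]

lemma Kmat_transpose (q : ℕ) (x y : ℝ) : (Kmat q x y)ᵀ = Kmat q x y := by
  ext i k
  simp [Matrix.transpose_apply, Kmat_apply, eq_comm]

lemma Kmat_one (q : ℕ) : Kmat q 1 0 = 1 := by
  ext i k; simp [Kmat_apply, Matrix.one_apply]

lemma Kmat_mul (q : ℕ) (x y x' y' : ℝ) :
    Kmat q x y * Kmat q x' y' = Kmat q (x*x') (x*y' + y*x' + q*y*y') := by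
  ext i k
  simp only [Matrix.mul_apply, Kmat_apply]
  have : ∀ j : Fin q, (x * (if i = j then 1 else 0) + y) * (x' * (if j = k then 1 else 0) + y')
      = x*x'*((if i = j then 1 else 0)*(if j = k then 1 else 0))
        + x*y'*(if i = j then 1 else 0) + y*x'*(if j = k then 1 else 0) + y*y' := by
    intro j; ring
  simp only [this, Finset.sum_add_distrib, Finset.sum_const, Finset.card_univ,
    Fintype.card_fin, nsmul_eq_mul, ← Finset.mul_sum]
  have e1 : (∑ j : Fin q, (if i = j then (1:ℝ) else 0)*(if j = k then 1 else 0))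
      = if i = k then 1 else 0 := by
    rw [Finset.sum_eq_single k]
    · simp
    · intro b _ hb; simp [hb]
    · simp
  have e2 : (∑ j : Fin q, (if i = j then (1:ℝ) else 0)) = 1 := by simp
  have e3 : (∑ j : Fin q, (if j = k then (1:ℝ) else 0)) = 1 := by simp
  rw [e1, e2, e3]; ring

lemma Kmat_trace (q : ℕ) (x y : ℝ) : Matrix.trace (Kmat q x y) = q * (x + y) := by
  simp [Matrix.trace, Matrix.diag, Kmat_apply, Finset.sum_add_distrib, mul_comm]
  ring

lemma Kmat_mul_inv (q : ℕ) (x y : ℝ) (hx : x ≠ 0) (hxy : x + q*y ≠ 0) :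
    Kmat q x y * Kmat q x⁻¹ (-y/(x*(x+q*y))) = 1 := by
  rw [Kmat_mul]
  have h1 : x * x⁻¹ = 1 := mul_inv_cancel₀ hx
  have h2 : x * (-y/(x*(x+q*y))) + y * x⁻¹ + q*(y*(-y/(x*(x+q*y)))) = 0 := by
    have hxy' : y * q + x ≠ 0 := by rwa [add_comm, mul_comm] at hxy
    field_simp
    linear_combination (-y) * (mul_inv_cancel₀ hxy')
  rw [h1, show x * (-y/(x*(x+q*y))) + y * x⁻¹ + (q:ℝ)*y*(-y/(x*(x+q*y)))
      = x * (-y/(x*(x+q*y))) + y * x⁻¹ + q*(y*(-y/(x*(x+q*y)))) from by ring, h2, Kmat_one]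

lemma Kmat_isUnit_det (q : ℕ) (x y : ℝ) (hx : x ≠ 0) (hxy : x + q*y ≠ 0) :
    IsUnit (Kmat q x y).det :=
  Matrix.isUnit_det_of_right_inverse (Kmat_mul_inv q x y hx hxy)

lemma Kmat_inv (q : ℕ) (x y : ℝ) (hx : x ≠ 0) (hxy : x + q*y ≠ 0) :
    (Kmat q x y)⁻¹ = Kmat q x⁻¹ (-y/(x*(x+q*y))) :=
  Matrix.inv_eq_right_inv (Kmat_mul_inv q x y hx hxy)

lemma Kmat_trace_inv (q : ℕ) (x y : ℝ) (hx : x ≠ 0) (hxy : x + q*y ≠ 0) :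
    Matrix.trace (Kmat q x y)⁻¹ = (q-1)/x + 1/(x+q*y) := by
  rw [Kmat_inv q x y hx hxy, Kmat_trace]
  field_simp
  ring

lemma card_filter_card_subset (q r : ℕ) (A : Finset (Fin q)) (hA : A.card ≤ r) :
    ((Finset.univ : Finset (Finset (Fin q))).filter (fun S => S.card = r ∧ A ⊆ S)).card
      = Nat.choose (q - A.card) (r - A.card) := by
  have key : ((Finset.univ : Finset (Finset (Fin q))).filter (fun S => S.card = r ∧ A ⊆ S)).card
      = (Aᶜ.powersetCard (r - A.card)).card := by
    apply Finset.card_bij' (fun S _ => S \ A) (fun T _ => T ∪ A)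
    · intro S hS
      simp only [Finset.mem_filter, Finset.mem_univ, true_and] at hS
      rw [Finset.mem_powersetCard]
      constructor
      · intro x hx
        simp only [Finset.mem_sdiff] at hx
        simp [Finset.mem_compl, hx.2]
      · rw [Finset.card_sdiff_of_subset hS.2, hS.1]
    · intro T hT
      rw [Finset.mem_powersetCard] at hT
      have hdisj : Disjoint T A := by
        rw [Finset.disjoint_right]
        intro a haA haT
        exact (Finset.mem_compl.mp (hT.1 haT)) haA
      simp only [Finset.mem_filter, Finset.mem_univ, true_and]
      constructor
      · rw [Finset.card_union_of_disjoint hdisj, hT.2]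
        omega
      · exact Finset.subset_union_right
    · intro S hS
      simp only [Finset.mem_filter, Finset.mem_univ, true_and] at hS
      exact Finset.sdiff_union_of_subset hS.2
    · intro T hT
      rw [Finset.mem_powersetCard] at hT
      have hdisj : Disjoint T A := by
        rw [Finset.disjoint_right]
        intro a haA haT
        exact (Finset.mem_compl.mp (hT.1 haT)) haA
      exact Finset.union_sdiff_cancel_right hdisj
  rw [key, Finset.card_powersetCard, Finset.card_compl, Fintype.card_fin]

lemma GmatB_apply {q : ℕ} (p : Finset (Fin q) → ℝ) (i k : Fin q) :
    GmatB p i k = ∑ S : Finset (Fin q), p S * (ind S i * ind S k) := by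
  simp [GmatB, Matrix.sum_apply, Matrix.vecMulVec_apply]

lemma gvecB_apply {q : ℕ} (p : Finset (Fin q) → ℝ) (i : Fin q) :
    gvecB p i = ∑ S : Finset (Fin q), p S * ind S i := by
  simp [gvecB]

/-- Sum of indicator-products against the uniform-on-size-r design. -/
lemma sum_pu_subset {q r : ℕ} (c : ℝ) (A : Finset (Fin q)) (hA : A.card ≤ r) :
    (∑ S : Finset (Fin q), if S.card = r ∧ A ⊆ S then c else 0)
      = (Nat.choose (q - A.card) (r - A.card) : ℝ) * c := by
  rw [← Finset.sum_filter, Finset.sum_const,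
    card_filter_card_subset q r A hA, nsmul_eq_mul]

lemma GmatB_pu {q r : ℕ} (hr2 : 2 ≤ r) (i k : Fin q) :
    GmatB (fun S : Finset (Fin q) => if S.card = r then ((Nat.choose q r : ℝ))⁻¹ else 0) i k
      = if i = k then (Nat.choose (q-1) (r-1) : ℝ) * (Nat.choose q r : ℝ)⁻¹
        else (Nat.choose (q-2) (r-2) : ℝ) * (Nat.choose q r : ℝ)⁻¹ := by
  rw [GmatB_apply]
  have hterm : ∀ S : Finset (Fin q),
      (if S.card = r then ((Nat.choose q r : ℝ))⁻¹ else 0) * (ind S i * ind S k)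
      = if S.card = r ∧ ({i, k} : Finset (Fin q)) ⊆ S then ((Nat.choose q r : ℝ))⁻¹ else 0 := by
    intro S
    simp only [ind, Finset.insert_subset_iff, Finset.singleton_subset_iff]
    by_cases h1 : S.card = r <;> by_cases h2 : i ∈ S <;> by_cases h3 : k ∈ S <;>
      simp [h1, h2, h3]
  rw [Finset.sum_congr rfl (fun S _ => hterm S)]
  rcases eq_or_ne i k with h | h
  · subst h
    have hset : ({i, i} : Finset (Fin q)) = {i} := by simp
    rw [hset]
    rw [sum_pu_subset _ {i} (by simp; omega)]
    simp
  · have hcard : ({i, k} : Finset (Fin q)).card = 2 := by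
      rw [Finset.card_insert_of_notMem (by simp [h]), Finset.card_singleton]
    rw [sum_pu_subset _ {i, k} (by rw [hcard]; omega), hcard]
    simp [h]

lemma gvecB_pu {q r : ℕ} (hr1 : 1 ≤ r) (i : Fin q) :
    gvecB (fun S : Finset (Fin q) => if S.card = r then ((Nat.choose q r : ℝ))⁻¹ else 0) i
      = (Nat.choose (q-1) (r-1) : ℝ) * (Nat.choose q r : ℝ)⁻¹ := by
  rw [gvecB_apply]
  have hterm : ∀ S : Finset (Fin q),
      (if S.card = r then ((Nat.choose q r : ℝ))⁻¹ else 0) * ind S i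
      = if S.card = r ∧ ({i} : Finset (Fin q)) ⊆ S then ((Nat.choose q r : ℝ))⁻¹ else 0 := by
    intro S
    simp only [ind, Finset.singleton_subset_iff]
    by_cases h1 : S.card = r <;> by_cases h2 : i ∈ S <;> simp [h1, h2]
  rw [Finset.sum_congr rfl (fun S _ => hterm S), sum_pu_subset _ {i} (by simp; omega)]
  simp

lemma sum_pu {q r : ℕ} (hr : r ≤ q) :
    (∑ S : Finset (Fin q), if S.card = r then ((Nat.choose q r : ℝ))⁻¹ else 0) = 1 := by
  have hterm : ∀ S : Finset (Fin q),
      (if S.card = r then ((Nat.choose q r : ℝ))⁻¹ else 0)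
      = if S.card = r ∧ (∅ : Finset (Fin q)) ⊆ S then ((Nat.choose q r : ℝ))⁻¹ else 0 := by
    intro S; simp
  rw [Finset.sum_congr rfl (fun S _ => hterm S), sum_pu_subset _ ∅ (by simp)]
  simp only [Finset.card_empty, Nat.sub_zero]
  rw [mul_inv_cancel₀]
  exact_mod_cast (Nat.choose_pos hr).ne'

def alphaC (m : ℕ) : ℝ := ((m:ℝ)+1)/(2*(2*(m:ℝ)+1))
def cC (m : ℕ) : ℝ := ((m:ℝ)+1)/(2*(m:ℝ)+1)

lemma choose_cast_diag (m : ℕ) :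
    (Nat.choose (2*m) m : ℝ) * (Nat.choose (2*m+1) (m+1) : ℝ)⁻¹ = cC m := by
  have h := Nat.add_one_mul_choose_eq (2*m) m
  have h2 : (2*m+1) * Nat.choose (2*m) m = Nat.choose (2*m+1) (m+1) * (m+1) := by
    simpa [Nat.succ_eq_add_one] using h
  have hpos : (0:ℝ) < (Nat.choose (2*m+1) (m+1) : ℝ) := by
    exact_mod_cast Nat.choose_pos (by omega)
  rw [cC]
  field_simp
  push_cast
  have := congrArg (fun x : ℕ => (x : ℝ)) h2
  push_cast at this
  linarith

lemma two_mul_choose_succ (n : ℕ) :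
    2 * Nat.choose (2*n+1) n = Nat.choose (2*n+2) (n+1) := by
  have h := Nat.add_one_mul_choose_eq (2*n+1) n
  have h2 : (2*n+2) * Nat.choose (2*n+1) n = Nat.choose (2*n+2) (n+1) * (n+1) := by
    simpa [Nat.succ_eq_add_one] using h
  have h3 : (n+1) * (2 * Nat.choose (2*n+1) n) = (n+1) * Nat.choose (2*n+2) (n+1) := by
    ring_nf
    ring_nf at h2
    omega
  exact Nat.eq_of_mul_eq_mul_left (by omega) h3

lemma choose_cast_offdiag (m : ℕ) (hm : 1 ≤ m) :
    (Nat.choose (2*m-1) (m-1) : ℝ) * (Nat.choose (2*m+1) (m+1) : ℝ)⁻¹ = alphaC m := by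
  obtain ⟨n, rfl⟩ : ∃ n, m = n + 1 := ⟨m - 1, by omega⟩
  have e1 : 2*(n+1)-1 = 2*n+1 := by omega
  have e2 : (n+1)-1 = n := by omega
  rw [e1, e2]
  have h2 : (2*Nat.choose (2*n+1) n : ℝ) = (Nat.choose (2*(n+1)) (n+1) : ℝ) := by
    rw [show 2*(n+1) = 2*n+2 from by omega]
    exact_mod_cast two_mul_choose_succ n
  have h3 := choose_cast_diag (n+1)
  rw [← h2] at h3
  have h0 : (2*((n:ℝ)+1)+1) ≠ 0 := by positivity
  have hac : alphaC (n+1) = cC (n+1) / 2 := by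
    rw [alphaC, cC, div_div]; ring_nf
  rw [hac]
  linear_combination h3 / 2

lemma HmatB_apply {q : ℕ} (t : ℝ) (p : Finset (Fin q) → ℝ) (i k : Fin q) :
    HmatB t p i k = GmatB p i k - t * (gvecB p i * gvecB p k) := by
  simp [HmatB, Matrix.sub_apply, Matrix.smul_apply, Matrix.vecMulVec_apply, smul_eq_mul]

lemma Hstar_Kmat (m q M : ℕ) (hm : 1 ≤ m) (hq : q = 2*m+1) (hM : M = m+1) (t : ℝ) :
    HmatB t (fun S : Finset (Fin q) => if S.card = M then ((Nat.choose q M : ℝ))⁻¹ else 0)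
      = Kmat q (alphaC m) (alphaC m - t * (cC m)^2) := by
  subst hq; subst hM
  ext i k
  rw [HmatB_apply, Kmat_apply,
    GmatB_pu (by omega) i k, gvecB_pu (by omega) i, gvecB_pu (by omega) k]
  have e1 : 2*m+1 - 1 = 2*m := by omega
  have e2 : m+1 - 1 = m := by omega
  have e3 : 2*m+1 - 2 = 2*m-1 := by omega
  have e4 : m+1 - 2 = m-1 := by omega
  rw [e1, e2, e3, e4]
  rw [choose_cast_diag m, choose_cast_offdiag m hm]
  have h0 : (2*(m:ℝ)+1) ≠ 0 := by positivity
  have hc : cC m = 2 * alphaC m := by rw [cC, alphaC]; field_simp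
  rw [hc]
  split_ifs <;> ring

lemma vecMulVec_mulVec' {q : ℕ} (x y v : Fin q → ℝ) :
    Matrix.vecMulVec x y *ᵥ v = (y ⬝ᵥ v) • x := by
  ext i
  simp only [Matrix.mulVec, Matrix.vecMulVec_apply, dotProduct, Pi.smul_apply, smul_eq_mul,
    Finset.sum_mul, Finset.mul_sum]
  rw [Finset.sum_congr rfl]
  intro k _
  ring

lemma gvec_dot {q : ℕ} (p : Finset (Fin q) → ℝ) (v : Fin q → ℝ) :
    gvecB p ⬝ᵥ v = ∑ S : Finset (Fin q), p S * (ind S ⬝ᵥ v) := by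
  calc gvecB p ⬝ᵥ v = ∑ i : Fin q, ∑ S : Finset (Fin q), (p S * ind S i) * v i := by
        rw [dotProduct]
        exact Finset.sum_congr rfl fun i _ => by rw [gvecB_apply, Finset.sum_mul]
    _ = ∑ S : Finset (Fin q), ∑ i : Fin q, (p S * ind S i) * v i := Finset.sum_comm
    _ = ∑ S : Finset (Fin q), p S * (ind S ⬝ᵥ v) := by
        refine Finset.sum_congr rfl fun S _ => ?_
        rw [dotProduct, Finset.mul_sum]
        exact Finset.sum_congr rfl fun i _ => by ring

lemma Gmat_quad {q : ℕ} (p : Finset (Fin q) → ℝ) (v : Fin q → ℝ) :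
    v ⬝ᵥ (GmatB p *ᵥ v) = ∑ S : Finset (Fin q), p S * (ind S ⬝ᵥ v)^2 := by
  have h1 : ∀ i, (GmatB p *ᵥ v) i = ∑ S : Finset (Fin q), p S * ((ind S ⬝ᵥ v) * ind S i) := by
    intro i
    calc (GmatB p *ᵥ v) i = ∑ k : Fin q, ∑ S : Finset (Fin q), (p S * (ind S i * ind S k)) * v k := by
          rw [Matrix.mulVec, dotProduct]
          exact Finset.sum_congr rfl fun k _ => by rw [GmatB_apply, Finset.sum_mul]
      _ = ∑ S : Finset (Fin q), ∑ k : Fin q, (p S * (ind S i * ind S k)) * v k := Finset.sum_comm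
      _ = ∑ S : Finset (Fin q), p S * ((ind S ⬝ᵥ v) * ind S i) := by
          refine Finset.sum_congr rfl fun S _ => ?_
          calc ∑ k : Fin q, (p S * (ind S i * ind S k)) * v k
              = ∑ k : Fin q, (p S * ind S i) * (ind S k * v k) :=
                Finset.sum_congr rfl fun k _ => by ring
            _ = (p S * ind S i) * (ind S ⬝ᵥ v) := by rw [← Finset.mul_sum, dotProduct]
            _ = p S * ((ind S ⬝ᵥ v) * ind S i) := by ring
  calc v ⬝ᵥ (GmatB p *ᵥ v)
      = ∑ i : Fin q, ∑ S : Finset (Fin q), v i * (p S * ((ind S ⬝ᵥ v) * ind S i)) := by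
        rw [dotProduct]
        exact Finset.sum_congr rfl fun i _ => by rw [h1, Finset.mul_sum]
    _ = ∑ S : Finset (Fin q), ∑ i : Fin q, v i * (p S * ((ind S ⬝ᵥ v) * ind S i)) :=
        Finset.sum_comm
    _ = ∑ S : Finset (Fin q), p S * (ind S ⬝ᵥ v)^2 := by
        refine Finset.sum_congr rfl fun S _ => ?_
        calc ∑ i : Fin q, v i * (p S * ((ind S ⬝ᵥ v) * ind S i))
            = ∑ i : Fin q, (p S * (ind S ⬝ᵥ v)) * (ind S i * v i) :=
              Finset.sum_congr rfl fun i _ => by ring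
          _ = (p S * (ind S ⬝ᵥ v)) * (ind S ⬝ᵥ v) := by rw [← Finset.mul_sum, dotProduct]
          _ = p S * (ind S ⬝ᵥ v)^2 := by ring

lemma Hmat_quad {q : ℕ} (t : ℝ) (p : Finset (Fin q) → ℝ) (v : Fin q → ℝ) :
    v ⬝ᵥ (HmatB t p *ᵥ v)
      = (∑ S : Finset (Fin q), p S * (ind S ⬝ᵥ v)^2)
        - t * (∑ S : Finset (Fin q), p S * (ind S ⬝ᵥ v))^2 := by
  rw [HmatB, Matrix.sub_mulVec, dotProduct_sub, Matrix.smul_mulVec, dotProduct_smul,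
    vecMulVec_mulVec', dotProduct_smul, Gmat_quad]
  rw [show v ⬝ᵥ gvecB p = gvecB p ⬝ᵥ v from dotProduct_comm _ _, gvec_dot]
  simp only [smul_eq_mul]
  ring

lemma HmatB_isSymm {q : ℕ} (t : ℝ) (p : Finset (Fin q) → ℝ) :
    (HmatB t p)ᵀ = HmatB t p := by
  ext i k
  rw [Matrix.transpose_apply, HmatB_apply, HmatB_apply, GmatB_apply, GmatB_apply]
  rw [Finset.sum_congr rfl (fun S _ => by ring :
    ∀ S ∈ Finset.univ, p S * (ind S k * ind S i) = p S * (ind S i * ind S k))]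
  ring

lemma HmatB_posSemidef {q : ℕ} (t : ℝ) (p : Finset (Fin q) → ℝ)
    (hp : designMeasureB p) (ht0 : 0 ≤ t) (ht1 : t ≤ 1) : (HmatB t p).PosSemidef := by
  rw [Matrix.posSemidef_iff_dotProduct_mulVec]
  constructor
  · show (HmatB t p)ᴴ = HmatB t p
    have : (HmatB t p)ᴴ = (HmatB t p)ᵀ := by
      ext i k; simp [Matrix.conjTranspose_apply]
    rw [this, HmatB_isSymm]
  · intro x
    have hx : star x = x := by
      funext i; simp
    rw [hx, Hmat_quad]
    set y : Finset (Fin q) → ℝ := fun S => ind S ⬝ᵥ x with hy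
    have hCS : (∑ S : Finset (Fin q), p S * y S)^2 ≤ ∑ S : Finset (Fin q), p S * (y S)^2 := by
      have h := Finset.sum_mul_sq_le_sq_mul_sq Finset.univ
        (fun S : Finset (Fin q) => Real.sqrt (p S)) (fun S => Real.sqrt (p S) * y S)
      have e1 : ∀ S : Finset (Fin q), Real.sqrt (p S) * (Real.sqrt (p S) * y S) = p S * y S := by
        intro S
        rw [← mul_assoc, Real.mul_self_sqrt (hp.2.1 S)]
      have e2 : ∀ S : Finset (Fin q), Real.sqrt (p S) ^ 2 = p S := fun S => Real.sq_sqrt (hp.2.1 S)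
      have e3 : ∀ S : Finset (Fin q), (Real.sqrt (p S) * y S)^2 = p S * (y S)^2 := by
        intro S
        rw [mul_pow, e2]
      rw [Finset.sum_congr rfl (fun S _ => e1 S), Finset.sum_congr rfl (fun S _ => e2 S),
        Finset.sum_congr rfl (fun S _ => e3 S), hp.2.2, one_mul] at h
      exact h
    have hsum : 0 ≤ ∑ S : Finset (Fin q), p S * (y S)^2 :=
      Finset.sum_nonneg (fun S _ => mul_nonneg (hp.2.1 S) (sq_nonneg _))
    nlinarith [mul_le_mul_of_nonneg_left hCS ht0]

lemma conjT_real {q : ℕ} (M : Matrix (Fin q) (Fin q) ℝ) : Mᴴ = Mᵀ := by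
  ext i k; simp [Matrix.conjTranspose_apply]

lemma trace_mul_double {q : ℕ} (X Y : Matrix (Fin q) (Fin q) ℝ) :
    Matrix.trace (X * Y) = ∑ ij : Fin q × Fin q, X ij.1 ij.2 * Y ij.2 ij.1 := by
  rw [Fintype.sum_prod_type]
  simp [Matrix.trace, Matrix.diag, Matrix.mul_apply]

lemma trace_transpose_mul_self {q : ℕ} (Y : Matrix (Fin q) (Fin q) ℝ) :
    Matrix.trace (Yᵀ * Y) = ∑ ij : Fin q × Fin q, (Y ij.1 ij.2)^2 := by
  rw [trace_mul_double]
  rw [← Equiv.sum_comp (Equiv.prodComm (Fin q) (Fin q))]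
  exact Finset.sum_congr rfl fun ij _ => by
    simp [Matrix.transpose_apply, sq, Equiv.prodComm]

open scoped MatrixOrder in
lemma trace_CS {q : ℕ} (H B : Matrix (Fin q) (Fin q) ℝ) (hH : H.PosSemidef)
    (hdet : IsUnit H.det) (hBsym : Bᵀ = B) :
    (Matrix.trace B)^2 ≤ Matrix.trace H⁻¹ * Matrix.trace (B * H * B) := by
  set S := CFC.sqrt H with hSdef
  have hS2 : S * S = H := CFC.sqrt_mul_sqrt_self H hH.nonneg
  have hSsym : Sᵀ = S := by rw [← conjT_real]; exact (nonneg_iff_posSemidef.mp (CFC.sqrt_nonneg H)).1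
  have hSdet : IsUnit S.det := by
    apply isUnit_of_mul_isUnit_left (y := S.det)
    rw [← Matrix.det_mul, hS2]; exact hdet
  have hSinv : S⁻¹ * S = 1 := Matrix.nonsing_inv_mul _ hSdet
  set X := S⁻¹ with hXdef
  set Y := S * B with hYdef
  have htrB : Matrix.trace B = Matrix.trace (X * Y) := by
    rw [hYdef, hXdef, ← Matrix.mul_assoc, hSinv, Matrix.one_mul]
  have hXsym : Xᵀ = X := by rw [hXdef, Matrix.transpose_nonsing_inv, hSsym]
  have hHX : Matrix.trace H⁻¹ = ∑ ij : Fin q × Fin q, (X ij.1 ij.2)^2 := by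
    rw [← trace_transpose_mul_self, hXsym, hXdef, ← Matrix.mul_inv_rev, hS2]
  have hfact : Yᵀ * Y = B * H * B := by
    rw [hYdef, Matrix.transpose_mul, hSsym, hBsym, ← hS2]
    simp only [Matrix.mul_assoc]
  have hBHB : Matrix.trace (B * H * B) = ∑ ij : Fin q × Fin q, (Y ij.1 ij.2)^2 := by
    rw [← hfact, trace_transpose_mul_self]
  have key := Finset.sum_mul_sq_le_sq_mul_sq Finset.univ
    (fun ij : Fin q × Fin q => X ij.1 ij.2) (fun ij : Fin q × Fin q => Y ij.2 ij.1)
  have e1 : (∑ ij : Fin q × Fin q, X ij.1 ij.2 * Y ij.2 ij.1) = Matrix.trace (X * Y) :=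
    (trace_mul_double X Y).symm
  have e2 : (∑ ij : Fin q × Fin q, (Y ij.2 ij.1)^2) = ∑ ij : Fin q × Fin q, (Y ij.1 ij.2)^2 := by
    rw [← Equiv.sum_comp (Equiv.prodComm (Fin q) (Fin q))]
    exact Finset.sum_congr rfl fun ij _ => by simp [Equiv.prodComm]
  rw [e1, e2] at key
  rw [htrB, hHX, hBHB]
  exact key

open scoped MatrixOrder in
lemma trace_BHB_pos {q : ℕ} (hq : 0 < q) (H B : Matrix (Fin q) (Fin q) ℝ) (hH : H.PosSemidef)
    (hdet : IsUnit H.det) (hBsym : Bᵀ = B) (hBdet : IsUnit B.det) :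
    0 < Matrix.trace (B * H * B) := by
  haveI : Nonempty (Fin q) := ⟨⟨0, hq⟩⟩
  set S := CFC.sqrt H with hSdef
  have hS2 : S * S = H := CFC.sqrt_mul_sqrt_self H hH.nonneg
  have hSsym : Sᵀ = S := by rw [← conjT_real]; exact (nonneg_iff_posSemidef.mp (CFC.sqrt_nonneg H)).1
  have hSdet : IsUnit S.det := by
    apply isUnit_of_mul_isUnit_left (y := S.det)
    rw [← Matrix.det_mul, hS2]; exact hdet
  set Y := S * B with hYdef
  have hfact : Yᵀ * Y = B * H * B := by
    rw [hYdef, Matrix.transpose_mul, hSsym, hBsym, ← hS2]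
    simp only [Matrix.mul_assoc]
  have hBHB : Matrix.trace (B * H * B) = ∑ ij : Fin q × Fin q, (Y ij.1 ij.2)^2 := by
    rw [← hfact, trace_transpose_mul_self]
  have hYdet : IsUnit Y.det := by
    rw [hYdef, Matrix.det_mul]; exact hSdet.mul hBdet
  have hYne : Y ≠ 0 := by
    intro h
    rw [h, Matrix.det_zero] at hYdet
    simp at hYdet
  obtain ⟨i, j, hij⟩ : ∃ i j, Y i j ≠ 0 := by
    by_contra h
    push_neg at h
    exact hYne (by ext i j; simpa using h i j)
  rw [hBHB]
  refine Finset.sum_pos' (fun ij _ => sq_nonneg _) ⟨(i, j), Finset.mem_univ _, ?_⟩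
  have : Y (i, j).1 (i, j).2 ≠ 0 := hij
  positivity

def uC (m : ℕ) : ℝ := 2*(2*(m:ℝ)+1)/((m:ℝ)+1)
def vC (m : ℕ) (t : ℝ) : ℝ := (2*t*((m:ℝ)+1) - (2*(m:ℝ)+1))/((1-t)*((m:ℝ)+1)^2)
def gammaC (m : ℕ) (t : ℝ) : ℝ := alphaC m - t * (cC m)^2

section scalars

variable (m : ℕ) (t : ℝ)

lemma sc_inv1 (ht1 : t < 1) : alphaC m * uC m = 1 := by
  have hM : ((m:ℝ)+1) ≠ 0 := by positivity
  have hq : (2*(m:ℝ)+1) ≠ 0 := by positivity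
  rw [alphaC, uC]
  field_simp

lemma sc_inv2 (ht1 : t < 1) :
    alphaC m * vC m t + gammaC m t * uC m + (2*(m:ℝ)+1)*(gammaC m t * vC m t) = 0 := by
  have hM : ((m:ℝ)+1) ≠ 0 := by positivity
  have hq : (2*(m:ℝ)+1) ≠ 0 := by positivity
  have hs : (1:ℝ) - t ≠ 0 := by linarith
  rw [alphaC, vC, gammaC, alphaC, cC, uC]
  field_simp
  ring

lemma sc_w0 (ht1 : t < 1) :
    uC m + (2*(m:ℝ)+1)*vC m t = (2*(m:ℝ)+1)/((1-t)*((m:ℝ)+1)^2) := by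
  have hM : ((m:ℝ)+1) ≠ 0 := by positivity
  have hs : (1:ℝ) - t ≠ 0 := by linarith
  rw [uC, vC]
  field_simp
  ring

lemma sc_y (htb : t ≤ (2*(m:ℝ)+1)/((2*(m:ℝ)+1)+1)) : 1 ≤ 2*(1-t)*((m:ℝ)+1) := by
  have hq : (0:ℝ) < (2*(m:ℝ)+1)+1 := by positivity
  rw [le_div_iff₀ hq] at htb
  nlinarith

lemma sc_b_nonpos (ht0 : 0 ≤ t) (ht1 : t < 1) (htb : t ≤ (2*(m:ℝ)+1)/((2*(m:ℝ)+1)+1)) :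
    2*uC m*vC m t + (2*(m:ℝ)+1)*(vC m t)^2 ≤ 0 := by
  have hy := sc_y m t htb
  have hs : (0:ℝ) < 1 - t := by linarith
  have hM : (0:ℝ) < (m:ℝ)+1 := by positivity
  have hu : 0 < uC m := by rw [uC]; positivity
  have hw0 : 0 < uC m + (2*(m:ℝ)+1)*vC m t := by
    rw [sc_w0 m t ht1]; positivity
  have hv : vC m t ≤ 0 := by
    rw [vC]
    apply div_nonpos_of_nonpos_of_nonneg
    · nlinarith
    · positivity
  nlinarith

lemma sc_h1 (ht0 : 0 ≤ t) (ht1 : t < 1) (htb : t ≤ (2*(m:ℝ)+1)/((2*(m:ℝ)+1)+1)) :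
    0 ≤ (2*uC m*vC m t + (2*(m:ℝ)+1)*(vC m t)^2)*(2*(m:ℝ)+1)
      + ((uC m)^2 - 2*t*cC m*(uC m + (2*(m:ℝ)+1)*vC m t)^2) := by
  have hy := sc_y m t htb
  have key : (2*uC m*vC m t + (2*(m:ℝ)+1)*(vC m t)^2)*(2*(m:ℝ)+1)
      + ((uC m)^2 - 2*t*cC m*(uC m + (2*(m:ℝ)+1)*vC m t)^2)
      = (uC m + (2*(m:ℝ)+1)*vC m t)^2 * (1 - 2*t*cC m) := by ring
  rw [key]
  apply mul_nonneg (sq_nonneg _)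
  have hq : (0:ℝ) < 2*(m:ℝ)+1 := by positivity
  rw [cC, sub_nonneg,
    show 2*t*(((m:ℝ)+1)/(2*(m:ℝ)+1)) = (2*t*((m:ℝ)+1))/(2*(m:ℝ)+1) from by ring,
    div_le_one hq]
  nlinarith

lemma sc_h2 (ht0 : 0 ≤ t) (ht1 : t < 1) (htb : t ≤ (2*(m:ℝ)+1)/((2*(m:ℝ)+1)+1)) :
    (2*uC m*vC m t + (2*(m:ℝ)+1)*(vC m t)^2)*((2*(m:ℝ)+1)+2)
      + ((uC m)^2 - 2*t*cC m*(uC m + (2*(m:ℝ)+1)*vC m t)^2) ≤ 0 := by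
  have hy := sc_y m t htb
  have hs : (0:ℝ) < 1 - t := by linarith
  have hM : (0:ℝ) < (m:ℝ)+1 := by positivity
  have hq : (0:ℝ) < 2*(m:ℝ)+1 := by positivity
  have key : (2*uC m*vC m t + (2*(m:ℝ)+1)*(vC m t)^2)*((2*(m:ℝ)+1)+2)
      + ((uC m)^2 - 2*t*cC m*(uC m + (2*(m:ℝ)+1)*vC m t)^2)
      = -((2*(m:ℝ)+1)*((2*(1-t)*((m:ℝ)+1))-1)*(2*(2*(1-t)*((m:ℝ)+1))+1))
          /((1-t)^2*((m:ℝ)+1)^4) := by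
    rw [uC, vC, cC]
    field_simp
    ring
  rw [key, neg_div]
  apply neg_nonpos_of_nonneg
  apply div_nonneg _ (by positivity)
  have h1 : 0 ≤ (2*(1-t)*((m:ℝ)+1))-1 := by linarith
  have h2 : 0 ≤ 2*(2*(1-t)*((m:ℝ)+1))+1 := by nlinarith
  positivity

lemma sc_trace_id (ht1 : t < 1) :
    (2*(m:ℝ)+1)*(uC m + vC m t)
      = ((uC m)^2*((m:ℝ)+1) + (2*uC m*vC m t + (2*(m:ℝ)+1)*(vC m t)^2)*((m:ℝ)+1)^2
          - 2*t*cC m*(uC m + (2*(m:ℝ)+1)*vC m t)^2*((m:ℝ)+1))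
        + t*(cC m)^2*(uC m + (2*(m:ℝ)+1)*vC m t)^2*(2*(m:ℝ)+1) := by
  have hM : ((m:ℝ)+1) ≠ 0 := by positivity
  have hq : (2*(m:ℝ)+1) ≠ 0 := by positivity
  have hs : (1:ℝ) - t ≠ 0 := by linarith
  rw [uC, vC, cC]
  field_simp
  ring

lemma sc_trace_pos (hm : 1 ≤ m) (ht0 : 0 ≤ t) (ht1 : t < 1) :
    0 < (2*(m:ℝ)+1)*(uC m + vC m t) := by
  have hs : (0:ℝ) < 1 - t := by linarith
  have hM : (0:ℝ) < (m:ℝ)+1 := by positivity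
  have hm1 : (1:ℝ) ≤ (m:ℝ) := by exact_mod_cast hm
  have key : (2*(m:ℝ)+1)*(uC m + vC m t)
      = (2*(m:ℝ)+1)*((2*(m:ℝ)+1)^2 - 4*t*(m:ℝ)*((m:ℝ)+1))/((1-t)*((m:ℝ)+1)^2) := by
    rw [uC, vC]
    field_simp
    ring
  rw [key]
  apply div_pos _ (by positivity)
  have h4 : (0:ℝ) ≤ 4*(m:ℝ)*((m:ℝ)+1) := by positivity
  have h4' : 4*t*(m:ℝ)*((m:ℝ)+1) ≤ 4*(m:ℝ)*((m:ℝ)+1) := by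
    nlinarith [mul_le_of_le_one_left h4 ht1.le]
  have h5 : (1:ℝ) ≤ (2*(m:ℝ)+1)^2 - 4*t*(m:ℝ)*((m:ℝ)+1) := by nlinarith
  have hq : (0:ℝ) < 2*(m:ℝ)+1 := by positivity
  nlinarith

end scalars

lemma Kmat_mulVec {q : ℕ} (x y : ℝ) (v : Fin q → ℝ) :
    Kmat q x y *ᵥ v = fun i => x * v i + y * ∑ j, v j := by
  ext i
  rw [Matrix.mulVec, dotProduct]
  calc ∑ k, Kmat q x y i k * v k
      = ∑ k, (x * ((if i = k then 1 else 0) * v k) + y * v k) :=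
        Finset.sum_congr rfl fun k _ => by rw [Kmat_apply]; ring
    _ = x * ∑ k, (if i = k then 1 else 0) * v k + y * ∑ k, v k := by
        rw [Finset.sum_add_distrib, Finset.mul_sum, Finset.mul_sum]
    _ = x * v i + y * ∑ j, v j := by
        congr 1
        rw [Finset.sum_eq_single i (fun b _ hb => by simp [Ne.symm hb]) (by simp)]
        simp

lemma dot_Kmat {q : ℕ} (x y : ℝ) (w v : Fin q → ℝ) :
    w ⬝ᵥ (Kmat q x y *ᵥ v) = x * (w ⬝ᵥ v) + y * (∑ i, w i) * (∑ i, v i) := by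
  rw [Kmat_mulVec, dotProduct, dotProduct]
  calc ∑ i, w i * (x * v i + y * ∑ j, v j)
      = ∑ i, (x * (w i * v i) + (y * ∑ j, v j) * w i) :=
        Finset.sum_congr rfl fun i _ => by ring
    _ = x * (∑ i, w i * v i) + (y * ∑ j, v j) * ∑ i, w i := by
        rw [Finset.sum_add_distrib, ← Finset.mul_sum, ← Finset.mul_sum]
    _ = x * (∑ i, w i * v i) + y * (∑ i, w i) * (∑ i, v i) := by ring

lemma sum_ind {q : ℕ} (S : Finset (Fin q)) : (∑ i, ind S i) = (S.card : ℝ) := by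
  rw [show (∑ i, ind S i) = ∑ i, (if i ∈ S then (1:ℝ) else 0) from rfl, Finset.sum_boole]
  congr 1
  simp [Finset.filter_mem_eq_inter]

lemma ind_dot_ind {q : ℕ} (S : Finset (Fin q)) : ind S ⬝ᵥ ind S = (S.card : ℝ) := by
  rw [dotProduct, ← sum_ind S]
  exact Finset.sum_congr rfl fun i _ => by by_cases h : i ∈ S <;> simp [ind, h]

lemma trace_mul_vecMulVec {q : ℕ} (M : Matrix (Fin q) (Fin q) ℝ) (x y : Fin q → ℝ) :
    Matrix.trace (M * Matrix.vecMulVec x y) = y ⬝ᵥ (M *ᵥ x) := by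
  rw [trace_mul_double, Fintype.sum_prod_type, dotProduct]
  refine Finset.sum_congr rfl fun i _ => ?_
  rw [Matrix.mulVec, dotProduct, Finset.mul_sum]
  exact Finset.sum_congr rfl fun j _ => by
    rw [Matrix.vecMulVec_apply]; ring

lemma trace_BVB {q : ℕ} (B : Matrix (Fin q) (Fin q) ℝ) (x y : Fin q → ℝ) :
    Matrix.trace (B * Matrix.vecMulVec x y * B) = y ⬝ᵥ ((B * B) *ᵥ x) := by
  rw [Matrix.trace_mul_comm, ← Matrix.mul_assoc, trace_mul_vecMulVec]

lemma trace_B_H_B {q : ℕ} (B : Matrix (Fin q) (Fin q) ℝ) (t : ℝ) (p : Finset (Fin q) → ℝ) :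
    Matrix.trace (B * HmatB t p * B)
      = (∑ S : Finset (Fin q), p S * (ind S ⬝ᵥ ((B * B) *ᵥ ind S)))
        - t * (gvecB p ⬝ᵥ ((B * B) *ᵥ gvecB p)) := by
  have hsplit : B * HmatB t p * B
      = (∑ S : Finset (Fin q), p S • (B * Matrix.vecMulVec (ind S) (ind S) * B))
        - t • (B * Matrix.vecMulVec (gvecB p) (gvecB p) * B) := by
    rw [HmatB, GmatB, Matrix.mul_sub, Matrix.sub_mul, Finset.mul_sum, Finset.sum_mul]
    congr 1
    · exact Finset.sum_congr rfl fun S _ => by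
        rw [mul_smul_comm, smul_mul_assoc]
    · rw [mul_smul_comm, smul_mul_assoc]
  rw [hsplit, Matrix.trace_sub, Matrix.trace_smul, Matrix.trace_sum]
  have hterm : ∀ S : Finset (Fin q),
      Matrix.trace (p S • (B * Matrix.vecMulVec (ind S) (ind S) * B))
        = p S * (ind S ⬝ᵥ ((B * B) *ᵥ ind S)) := by
    intro S
    rw [Matrix.trace_smul, trace_BVB, smul_eq_mul]
  rw [Finset.sum_congr rfl fun S _ => hterm S, trace_BVB, smul_eq_mul]

lemma sum_gvec {q : ℕ} (p : Finset (Fin q) → ℝ) :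
    (∑ i, gvecB p i) = ∑ S : Finset (Fin q), p S * (S.card : ℝ) := by
  calc (∑ i, gvecB p i) = ∑ i, ∑ S : Finset (Fin q), p S * ind S i := by
        exact Finset.sum_congr rfl fun i _ => gvecB_apply p i
    _ = ∑ S : Finset (Fin q), ∑ i, p S * ind S i := Finset.sum_comm
    _ = ∑ S : Finset (Fin q), p S * (S.card : ℝ) := by
        refine Finset.sum_congr rfl fun S _ => ?_
        rw [← Finset.mul_sum, sum_ind]

lemma sq_dot_nonneg {q : ℕ} (B : Matrix (Fin q) (Fin q) ℝ) (hBsym : Bᵀ = B) (z : Fin q → ℝ) :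
    0 ≤ z ⬝ᵥ ((B * B) *ᵥ z) := by
  rw [← Matrix.mulVec_mulVec, Matrix.dotProduct_mulVec, ← hBsym, Matrix.vecMul_transpose,
    hBsym]
  exact Finset.sum_nonneg fun i _ => mul_self_nonneg _

lemma psi_le (b e Mr j : ℝ) (hb : b ≤ 0) (h1 : 0 ≤ b*(2*Mr-1) + e) (h2 : b*(2*Mr+1) + e ≤ 0)
    (hcase : (1 ≤ j ∧ j ≤ Mr - 1) ∨ j = Mr ∨ Mr + 1 ≤ j) :
    b*j^2 + e*j ≤ b*Mr^2 + e*Mr := by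
  have key : (b*Mr^2 + e*Mr) - (b*j^2 + e*j) = (Mr - j)*(b*(Mr+j) + e) := by ring
  rcases hcase with ⟨hj1, hj2⟩ | h | h
  · have hle : b*(2*Mr-1) ≤ b*(Mr+j) := mul_le_mul_of_nonpos_left (by linarith) hb
    have hf : 0 ≤ (Mr - j)*(b*(Mr+j) + e) :=
      mul_nonneg (by linarith) (by linarith)
    linarith
  · subst h; exact le_rfl
  · have hle : b*(Mr+j) ≤ b*(2*Mr+1) := mul_le_mul_of_nonpos_left (by linarith) hb
    have hf : 0 ≤ (Mr - j)*(b*(Mr+j) + e) := by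
      have := mul_nonneg (a := -(Mr - j)) (b := -(b*(Mr+j) + e)) (by linarith) (by linarith)
      nlinarith [this]
    linarith

lemma sc_E0 (m : ℕ) (t : ℝ) (ht1 : t < 1) :
    alphaC m + (2*(m:ℝ)+1)*gammaC m t = (1-t)*((m:ℝ)+1)^2/(2*(m:ℝ)+1) := by
  have hq : (2*(m:ℝ)+1) ≠ 0 := by positivity
  rw [gammaC, alphaC, cC]
  field_simp
  ring

lemma forward_opt (m : ℕ) (hm : 1 ≤ m) (t : ℝ) (ht0 : 0 ≤ t) (ht1 : t < 1)
    (htb : t ≤ (2*(m:ℝ)+1)/((2*(m:ℝ)+1)+1)) (p : Finset (Fin (2*m+1)) → ℝ)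
    (hp : designMeasureB p) (hdet : IsUnit (HmatB t p).det) :
    Matrix.trace ((HmatB t (fun S : Finset (Fin (2*m+1)) =>
        if S.card = m + 1 then ((Nat.choose (2*m+1) (m+1) : ℝ))⁻¹ else 0))⁻¹)
      ≤ Matrix.trace ((HmatB t p)⁻¹) := by
  have hs : (0:ℝ) < 1 - t := by linarith
  have hcast : ((2*m+1 : ℕ):ℝ) = 2*(m:ℝ)+1 := by push_cast; ring
  have hHstar : HmatB t (fun S : Finset (Fin (2*m+1)) =>
      if S.card = m + 1 then ((Nat.choose (2*m+1) (m+1) : ℝ))⁻¹ else 0)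
      = Kmat (2*m+1) (alphaC m) (gammaC m t) := by
    rw [gammaC]; exact Hstar_Kmat m (2*m+1) (m+1) hm rfl rfl t
  set B := Kmat (2*m+1) (uC m) (vC m t) with hBdef
  have hu : 0 < uC m := by rw [uC]; positivity
  have hw0pos : 0 < uC m + (2*(m:ℝ)+1)*vC m t := by
    rw [sc_w0 m t ht1]; positivity
  have hBinvstar : (HmatB t (fun S : Finset (Fin (2*m+1)) =>
      if S.card = m + 1 then ((Nat.choose (2*m+1) (m+1) : ℝ))⁻¹ else 0))⁻¹ = B := by
    rw [hHstar]
    apply Matrix.inv_eq_right_inv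
    rw [hBdef, Kmat_mul, sc_inv1 m t ht1,
      show alphaC m * vC m t + gammaC m t * uC m + ((2*m+1:ℕ):ℝ)*gammaC m t*vC m t = 0 from by
        rw [hcast]; linear_combination sc_inv2 m t ht1,
      Kmat_one]
  have hBsym : Bᵀ = B := Kmat_transpose _ _ _
  have hBdet : IsUnit B.det := by
    apply Kmat_isUnit_det
    · exact ne_of_gt hu
    · rw [hcast]; exact ne_of_gt hw0pos
  have htrB : Matrix.trace B = (2*(m:ℝ)+1) * (uC m + vC m t) := by
    rw [hBdef, Kmat_trace, hcast]
  have htrBpos : 0 < Matrix.trace B := by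
    rw [htrB]; exact sc_trace_pos m t hm ht0 ht1
  -- positive semidefiniteness and CS
  have hH : (HmatB t p).PosSemidef := HmatB_posSemidef t p hp ht0 ht1.le
  have hCS := trace_CS (HmatB t p) B hH hdet hBsym
  have hTpos := trace_BHB_pos (by omega) (HmatB t p) B hH hdet hBsym hBdet
  -- main bound : trace (B * H * B) ≤ trace B
  have hW : B * B = Kmat (2*m+1) (uC m * uC m)
      (uC m * vC m t + vC m t * uC m + ((2*m+1:ℕ):ℝ)*vC m t * vC m t) := Kmat_mul _ _ _ _ _
  set a' : ℝ := uC m * uC m with ha'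
  set b' : ℝ := uC m * vC m t + vC m t * uC m + ((2*m+1:ℕ):ℝ)*vC m t * vC m t with hb'
  set c : ℝ := cC m with hc
  set d' : ℝ := a' + ((2*m+1:ℕ):ℝ) * b' with hd'
  set e : ℝ := a' - 2*t*c*d' with he
  set Mr : ℝ := (m:ℝ)+1 with hMr
  have hd'eq : d' = (uC m + (2*(m:ℝ)+1)*vC m t)^2 := by
    rw [hd', ha', hb', hcast]; ring
  have hble : b' ≤ 0 := by
    have h := sc_b_nonpos m t ht0 ht1 htb
    have heq : b' = 2*uC m*vC m t + (2*(m:ℝ)+1)*(vC m t)^2 := by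
      rw [hb', hcast]; ring
    rw [heq]; exact h
  have h1' : 0 ≤ b'*(2*Mr-1) + e := by
    have h := sc_h1 m t ht0 ht1 htb
    have heq : b'*(2*Mr-1) + e
        = (2*uC m*vC m t + (2*(m:ℝ)+1)*(vC m t)^2)*(2*(m:ℝ)+1)
          + ((uC m)^2 - 2*t*cC m*(uC m + (2*(m:ℝ)+1)*vC m t)^2) := by
      rw [he, hd', hb', ha', hc, hMr, hcast]; ring
    rw [heq]; exact h
  have h2' : b'*(2*Mr+1) + e ≤ 0 := by
    have h := sc_h2 m t ht0 ht1 htb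
    have heq : b'*(2*Mr+1) + e
        = (2*uC m*vC m t + (2*(m:ℝ)+1)*(vC m t)^2)*((2*(m:ℝ)+1)+2)
          + ((uC m)^2 - 2*t*cC m*(uC m + (2*(m:ℝ)+1)*vC m t)^2) := by
      rw [he, hd', hb', ha', hc, hMr, hcast]; ring
    rw [heq]; exact h
  have hpsiM : b'*Mr^2 + e*Mr + t*c^2*d'*((2*m+1:ℕ):ℝ) = Matrix.trace B := by
    have h := sc_trace_id m t ht1
    rw [htrB]
    rw [he, hd', hb', ha', hc, hMr, hcast]
    linear_combination -h
  have hmain : Matrix.trace (B * HmatB t p * B) ≤ Matrix.trace B := by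
    rw [trace_B_H_B]
    -- per-S dot products
    have hdotS : ∀ S : Finset (Fin (2*m+1)),
        ind S ⬝ᵥ ((B * B) *ᵥ ind S) = b'*(S.card:ℝ)^2 + (a')*(S.card:ℝ) := by
      intro S
      rw [hW, dot_Kmat, ind_dot_ind, sum_ind]
      ring
    set Sg : ℝ := ∑ S : Finset (Fin (2*m+1)), p S * (S.card : ℝ) with hSgdef
    have hSg : (∑ i, gvecB p i) = Sg := sum_gvec p
    set Gg : ℝ := gvecB p ⬝ᵥ gvecB p with hGg
    have hgq : gvecB p ⬝ᵥ ((B * B) *ᵥ gvecB p) = a'*Gg + b'*Sg^2 := by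
      rw [hW, dot_Kmat, hSg, hGg]; ring
    -- lower bound on the g-quadratic form
    set z : Fin (2*m+1) → ℝ := fun i => gvecB p i - c with hz
    have hz0 : 0 ≤ z ⬝ᵥ ((B * B) *ᵥ z) := sq_dot_nonneg B hBsym z
    have hzq : z ⬝ᵥ ((B * B) *ᵥ z) = a'*(z ⬝ᵥ z) + b'*(∑ i, z i)^2 := by
      rw [hW, dot_Kmat]; ring
    have hzz : z ⬝ᵥ z = Gg - 2*c*Sg + ((2*m+1:ℕ):ℝ)*c^2 := by
      rw [dotProduct]
      calc ∑ i, z i * z i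
          = ∑ i, ((gvecB p i * gvecB p i) - 2*c*(gvecB p i) + c^2) :=
            Finset.sum_congr rfl fun i _ => by rw [hz]; ring
        _ = (∑ i, gvecB p i * gvecB p i) - 2*c*(∑ i, gvecB p i)
            + ((2*m+1:ℕ):ℝ)*c^2 := by
            rw [Finset.sum_add_distrib, Finset.sum_sub_distrib, ← Finset.mul_sum,
              Finset.sum_const, Finset.card_univ, Fintype.card_fin, nsmul_eq_mul]
        _ = Gg - 2*c*Sg + ((2*m+1:ℕ):ℝ)*c^2 := by rw [hSg, hGg, dotProduct]
    have hzsum : (∑ i, z i) = Sg - ((2*m+1:ℕ):ℝ)*c := by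
      calc (∑ i, z i) = (∑ i, gvecB p i) - ∑ _i : Fin (2*m+1), c := by
            rw [← Finset.sum_sub_distrib]
        _ = Sg - ((2*m+1:ℕ):ℝ)*c := by
            rw [hSg, Finset.sum_const, Finset.card_univ, Fintype.card_fin, nsmul_eq_mul]
    rw [hzq, hzz, hzsum] at hz0
    have hglb : 2*c*d'*Sg - ((2*m+1:ℕ):ℝ)*c^2*d' ≤ a'*Gg + b'*Sg^2 := by
      have expand : a'*Gg + b'*Sg^2 - (2*c*d'*Sg - ((2*m+1:ℕ):ℝ)*c^2*d')
          = a'*(Gg - 2*c*Sg + ((2*m+1:ℕ):ℝ)*c^2) + b'*(Sg - ((2*m+1:ℕ):ℝ)*c)^2 := by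
        rw [hd']; ring
      linarith
    have hstep1 : (∑ S : Finset (Fin (2*m+1)), p S * (ind S ⬝ᵥ ((B * B) *ᵥ ind S)))
        - t * (gvecB p ⬝ᵥ ((B * B) *ᵥ gvecB p))
        ≤ (∑ S : Finset (Fin (2*m+1)), p S * (b'*(S.card:ℝ)^2 + a'*(S.card:ℝ)))
          - t * (2*c*d'*Sg - ((2*m+1:ℕ):ℝ)*c^2*d') := by
      have hl : (∑ S : Finset (Fin (2*m+1)), p S * (ind S ⬝ᵥ ((B * B) *ᵥ ind S)))
          = ∑ S : Finset (Fin (2*m+1)), p S * (b'*(S.card:ℝ)^2 + a'*(S.card:ℝ)) :=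
        Finset.sum_congr rfl fun S _ => by rw [hdotS]
      rw [hl, hgq]
      have := mul_le_mul_of_nonneg_left hglb ht0
      linarith
    -- now per-S psi bound
    have hperS : ∀ S : Finset (Fin (2*m+1)),
        p S * (b'*(S.card:ℝ)^2 + a'*(S.card:ℝ)) - 2*t*c*d'*(p S * (S.card:ℝ))
          ≤ p S * (b'*Mr^2 + e*Mr) := by
      intro S
      rcases eq_or_ne S ∅ with rfl | hS
      · rw [hp.1]; simp
      · have hcard1 : 1 ≤ S.card := Finset.card_pos.mpr (Finset.nonempty_of_ne_empty hS)
        have hcardq : S.card ≤ 2*m+1 := by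
          simpa using Finset.card_le_univ S
        have hpsi : b'*(S.card:ℝ)^2 + e*(S.card:ℝ) ≤ b'*Mr^2 + e*Mr := by
          apply psi_le b' e Mr (S.card:ℝ) hble h1' h2'
          rcases lt_trichotomy S.card (m+1) with h | h | h
          · left
            constructor
            · exact_mod_cast hcard1
            · rw [hMr]
              have : S.card ≤ m := by omega
              have : (S.card : ℝ) ≤ (m:ℝ) := by exact_mod_cast this
              linarith
          · right; left; rw [hMr, h]; push_cast; ring
          · right; right
            rw [hMr]
            have : m+2 ≤ S.card := by omega
            have : ((m:ℝ))+2 ≤ (S.card:ℝ) := by exact_mod_cast this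
            linarith
        have hrw : p S * (b'*(S.card:ℝ)^2 + a'*(S.card:ℝ)) - 2*t*c*d'*(p S * (S.card:ℝ))
            = p S * (b'*(S.card:ℝ)^2 + e*(S.card:ℝ)) := by rw [he]; ring
        rw [hrw]
        exact mul_le_mul_of_nonneg_left hpsi (hp.2.1 S)
    -- sum over S
    have hsum2 : (∑ S : Finset (Fin (2*m+1)), p S * (b'*(S.card:ℝ)^2 + a'*(S.card:ℝ)))
        - t * (2*c*d'*Sg - ((2*m+1:ℕ):ℝ)*c^2*d')
        ≤ Matrix.trace B := by
      have hS1 : (∑ S : Finset (Fin (2*m+1)),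
          (p S * (b'*(S.card:ℝ)^2 + a'*(S.card:ℝ)) - 2*t*c*d'*(p S * (S.card:ℝ))))
          ≤ ∑ S : Finset (Fin (2*m+1)), p S * (b'*Mr^2 + e*Mr) :=
        Finset.sum_le_sum fun S _ => hperS S
      rw [Finset.sum_sub_distrib, ← Finset.sum_mul, ← Finset.mul_sum, ← hSgdef] at hS1
      rw [hp.2.2, one_mul] at hS1
      have : (∑ S : Finset (Fin (2*m+1)), p S * (b'*(S.card:ℝ)^2 + a'*(S.card:ℝ)))
          - t*(2*c*d'*Sg - ((2*m+1:ℕ):ℝ)*c^2*d')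
          = ((∑ S : Finset (Fin (2*m+1)), p S * (b'*(S.card:ℝ)^2 + a'*(S.card:ℝ)))
              - 2*t*c*d'*Sg) + t*c^2*d'*((2*m+1:ℕ):ℝ) := by ring
      rw [this, ← hpsiM]
      linarith
    linarith
  -- conclude
  rw [hBinvstar]
  have hX1 : (Matrix.trace B)^2 / Matrix.trace (B * HmatB t p * B)
      ≤ Matrix.trace ((HmatB t p)⁻¹) := (div_le_iff₀ hTpos).mpr hCS
  have hX2 : Matrix.trace B ≤ (Matrix.trace B)^2 / Matrix.trace (B * HmatB t p * B) := by
    rw [le_div_iff₀ hTpos, sq]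
    exact mul_le_mul_of_nonneg_left hmain htrBpos.le
  linarith

lemma Gstar_entry (m : ℕ) (hm : 1 ≤ m) (i k : Fin (2*m+1)) :
    GmatB (fun S : Finset (Fin (2*m+1)) =>
        if S.card = m+1 then ((Nat.choose (2*m+1) (m+1) : ℝ))⁻¹ else 0) i k
      = if i = k then cC m else alphaC m := by
  rw [GmatB_pu (by omega) i k]
  have e1 : 2*m+1 - 1 = 2*m := by omega
  have e2 : m+1 - 1 = m := by omega
  have e3 : 2*m+1 - 2 = 2*m-1 := by omega
  have e4 : m+1 - 2 = m-1 := by omega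
  rw [e1, e2, e3, e4, choose_cast_diag m, choose_cast_offdiag m hm]

lemma gstar_entry (m : ℕ) (hm : 1 ≤ m) (i : Fin (2*m+1)) :
    gvecB (fun S : Finset (Fin (2*m+1)) =>
        if S.card = m+1 then ((Nat.choose (2*m+1) (m+1) : ℝ))⁻¹ else 0) i = cC m := by
  rw [gvecB_pu (by omega) i]
  have e1 : 2*m+1 - 1 = 2*m := by omega
  have e2 : m+1 - 1 = m := by omega
  rw [e1, e2, choose_cast_diag m]

lemma ind_univ {q : ℕ} (i : Fin q) : ind (Finset.univ : Finset (Fin q)) i = 1 := by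
  simp [ind]

/-- The competitor design mixing the odd-half design with the full vector. -/
def pwDes (m : ℕ) (w : ℝ) : Finset (Fin (2*m+1)) → ℝ :=
  fun S => (1-w) * (if S.card = m+1 then ((Nat.choose (2*m+1) (m+1) : ℝ))⁻¹ else 0)
    + (if S = Finset.univ then w else 0)

lemma pw_design (m : ℕ) (hm : 1 ≤ m) (w : ℝ) (hw0 : 0 ≤ w) (hw1 : w ≤ 1) :
    designMeasureB (pwDes m w) := by
  refine ⟨?_, ?_, ?_⟩
  · rw [pwDes]
    have h1 : (∅ : Finset (Fin (2*m+1))).card ≠ m+1 := by simp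
    have h2 : (∅ : Finset (Fin (2*m+1))) ≠ Finset.univ := by
      intro h
      have := congrArg Finset.card h
      rw [Finset.card_empty, Finset.card_univ, Fintype.card_fin] at this
      omega
    rw [if_neg h1, if_neg h2]
    ring
  · intro S
    rw [pwDes]
    have hC : (0:ℝ) ≤ (Nat.choose (2*m+1) (m+1) : ℝ)⁻¹ := by positivity
    apply add_nonneg
    · apply mul_nonneg (by linarith)
      split_ifs
      · exact hC
      · exact le_refl 0
    · split_ifs
      · exact hw0
      · exact le_refl 0
  · unfold pwDes
    rw [Finset.sum_add_distrib, ← Finset.mul_sum, sum_pu (by omega),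
      Finset.sum_ite_eq' Finset.univ Finset.univ (fun _ => w), if_pos (Finset.mem_univ _)]
    ring

lemma Gpw_entry (m : ℕ) (hm : 1 ≤ m) (w : ℝ) (i k : Fin (2*m+1)) :
    GmatB (pwDes m w) i k = (1-w)*(if i = k then cC m else alphaC m) + w := by
  rw [GmatB_apply]
  have hsplit : ∀ S : Finset (Fin (2*m+1)),
      pwDes m w S * (ind S i * ind S k)
      = (1-w)*((if S.card = m+1 then ((Nat.choose (2*m+1) (m+1) : ℝ))⁻¹ else 0)
          * (ind S i * ind S k))
        + (if S = Finset.univ then w * (ind S i * ind S k) else 0) := by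
    intro S
    rw [pwDes]
    split_ifs <;> ring
  rw [Finset.sum_congr rfl fun S _ => hsplit S, Finset.sum_add_distrib, ← Finset.mul_sum,
    Finset.sum_ite_eq' Finset.univ Finset.univ
      (fun S => w * (ind S i * ind S k)), if_pos (Finset.mem_univ _),
    ind_univ, ind_univ, ← GmatB_apply, Gstar_entry m hm i k]
  ring

lemma gpw_entry (m : ℕ) (hm : 1 ≤ m) (w : ℝ) (i : Fin (2*m+1)) :
    gvecB (pwDes m w) i = (1-w)*cC m + w := by
  rw [gvecB_apply]
  have hsplit : ∀ S : Finset (Fin (2*m+1)),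
      pwDes m w S * ind S i
      = (1-w)*((if S.card = m+1 then ((Nat.choose (2*m+1) (m+1) : ℝ))⁻¹ else 0) * ind S i)
        + (if S = Finset.univ then w * ind S i else 0) := by
    intro S
    rw [pwDes]
    split_ifs <;> ring
  rw [Finset.sum_congr rfl fun S _ => hsplit S, Finset.sum_add_distrib, ← Finset.mul_sum,
    Finset.sum_ite_eq' Finset.univ Finset.univ (fun S => w * ind S i),
    if_pos (Finset.mem_univ _), ind_univ, ← gvecB_apply, gstar_entry m hm i]
  ring

lemma Hpw_Kmat (m : ℕ) (hm : 1 ≤ m) (t w : ℝ) :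
    HmatB t (pwDes m w)
      = Kmat (2*m+1) ((1-w)*alphaC m)
          ((1-w)*alphaC m + w - t*((1-w)*cC m + w)^2) := by
  have h0 : (2*(m:ℝ)+1) ≠ 0 := by positivity
  have hc : cC m = 2 * alphaC m := by rw [cC, alphaC]; field_simp
  ext i k
  rw [HmatB_apply, Kmat_apply, Gpw_entry m hm w i k, gpw_entry m hm w i, gpw_entry m hm w k]
  split_ifs with h <;> rw [hc] <;> ring

def Efun (m : ℕ) (t : ℝ) : ℝ → ℝ := fun w =>
  (1-w)*alphaC m + (2*(m:ℝ)+1)*((1-w)*alphaC m + w - t*((1-w)*cC m + w)^2)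

def ffun (m : ℕ) (t : ℝ) : ℝ → ℝ := fun w =>
  2*(m:ℝ)/((1-w)*alphaC m) + 1/(Efun m t w)

def EdC (m : ℕ) (t : ℝ) : ℝ :=
  -(alphaC m) + (2*(m:ℝ)+1)*(-(alphaC m) + 1 - t*(2*cC m*(1-cC m)))

def LC (m : ℕ) (t : ℝ) : ℝ :=
  2*(m:ℝ)/alphaC m - EdC m t/((1-t)*((m:ℝ)+1)^2/(2*(m:ℝ)+1))^2

lemma Efun_zero (m : ℕ) (t : ℝ) (ht1 : t < 1) :
    Efun m t 0 = (1-t)*((m:ℝ)+1)^2/(2*(m:ℝ)+1) := by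
  have h := sc_E0 m t ht1
  rw [gammaC] at h
  rw [Efun]
  norm_num
  linarith

lemma Efun_hasDeriv (m : ℕ) (t : ℝ) : HasDerivAt (Efun m t) (EdC m t) 0 := by
  have h1 : HasDerivAt (fun w : ℝ => (1-w)*alphaC m) (-(alphaC m)) 0 := by
    have := ((hasDerivAt_id (0:ℝ)).const_sub 1).mul_const (alphaC m)
    exact this.congr_deriv (by ring)
  have hh : HasDerivAt (fun w : ℝ => (1-w)*cC m + w) (1 - cC m) 0 := by
    have := (((hasDerivAt_id (0:ℝ)).const_sub 1).mul_const (cC m)).add (hasDerivAt_id 0)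
    exact this.congr_deriv (by ring)
  have hh2 : HasDerivAt (fun w : ℝ => ((1-w)*cC m + w)^2) (2*cC m*(1-cC m)) 0 := by
    have := hh.pow 2
    exact this.congr_deriv (by ring)
  have hinner : HasDerivAt (fun w : ℝ => (1-w)*alphaC m + w - t*((1-w)*cC m + w)^2)
      (-(alphaC m) + 1 - t*(2*cC m*(1-cC m))) 0 := by
    have := (h1.add (hasDerivAt_id 0)).sub (hh2.const_mul t)
    exact this.congr_deriv (by ring)
  have := h1.add (hinner.const_mul (2*(m:ℝ)+1))
  rw [EdC]
  exact this.congr_deriv (by ring)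

lemma ffun_hasDeriv (m : ℕ) (t : ℝ) (ht1 : t < 1) : HasDerivAt (ffun m t) (LC m t) 0 := by
  have hα : (0:ℝ) < alphaC m := by rw [alphaC]; positivity
  have hs : (0:ℝ) < 1 - t := by linarith
  have h1 : HasDerivAt (fun w : ℝ => (1-w)*alphaC m) (-(alphaC m)) 0 := by
    have := ((hasDerivAt_id (0:ℝ)).const_sub 1).mul_const (alphaC m)
    exact this.congr_deriv (by ring)
  have hg0 : (1-(0:ℝ))*alphaC m ≠ 0 := by norm_num; positivity
  have hE0pos : 0 < Efun m t 0 := by rw [Efun_zero m t ht1]; positivity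
  have hf1 := (hasDerivAt_const (0:ℝ) (2*(m:ℝ))).div h1 hg0
  have hf2 := (hasDerivAt_const (0:ℝ) (1:ℝ)).div (Efun_hasDeriv m t) (ne_of_gt hE0pos)
  have := hf1.add hf2
  have hfeq : (fun w : ℝ => 2*(m:ℝ)/((1-w)*alphaC m) + 1/(Efun m t w)) = ffun m t := rfl
  change HasDerivAt (ffun m t) _ 0 at this
  refine this.congr_deriv ?_
  rw [LC, Efun_zero m t ht1]
  field_simp
  ring

lemma LC_neg (m : ℕ) (hm : 1 ≤ m) (t : ℝ) (ht1 : t < 1)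
    (htb : (2*(m:ℝ)+1)/((2*(m:ℝ)+1)+1) < t) : LC m t < 0 := by
  have hm1 : (1:ℝ) ≤ (m:ℝ) := by exact_mod_cast hm
  have hs : (0:ℝ) < 1 - t := by linarith
  have hM : (0:ℝ) < (m:ℝ)+1 := by positivity
  have hq : (0:ℝ) < 2*(m:ℝ)+1 := by positivity
  have hq1 : (0:ℝ) < (2*(m:ℝ)+1)+1 := by positivity
  set y : ℝ := 2*(1-t)*((m:ℝ)+1) with hy
  have hy0 : 0 < y := by rw [hy]; positivity
  have hy1 : y < 1 := by
    rw [div_lt_iff₀ hq1] at htb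
    rw [hy]; nlinarith
  have key : LC m t = ((m:ℝ)*(2*(m:ℝ)+1)*(y^2*((m:ℝ)+1) - (m:ℝ) - y))
      /((1-t)^2*((m:ℝ)+1)^4) := by
    rw [LC, EdC, alphaC, cC, hy]
    field_simp
    ring
  rw [key]
  apply div_neg_of_neg_of_pos _ (by positivity)
  have hyy : y^2 < y := by nlinarith
  have hym : y^2*(m:ℝ) ≤ (m:ℝ) := by nlinarith
  have hnum : y^2*((m:ℝ)+1) - (m:ℝ) - y < 0 := by nlinarith
  have hmpos : (0:ℝ) < (m:ℝ) := by linarith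
  have : (0:ℝ) < (m:ℝ)*(2*(m:ℝ)+1) := by positivity
  nlinarith

lemma converse_exists (m : ℕ) (hm : 1 ≤ m) (t : ℝ) (ht0 : 0 ≤ t) (ht1 : t < 1)
    (htb : (2*(m:ℝ)+1)/((2*(m:ℝ)+1)+1) < t) :
    ∃ p : Finset (Fin (2*m+1)) → ℝ, designMeasureB p ∧ IsUnit (HmatB t p).det ∧
      Matrix.trace ((HmatB t p)⁻¹) < Matrix.trace ((HmatB t (fun S : Finset (Fin (2*m+1)) =>
        if S.card = m + 1 then ((Nat.choose (2*m+1) (m+1) : ℝ))⁻¹ else 0))⁻¹) := by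
  have hα : (0:ℝ) < alphaC m := by rw [alphaC]; positivity
  have hs : (0:ℝ) < 1 - t := by linarith
  have hcast : ((2*m+1 : ℕ):ℝ) = 2*(m:ℝ)+1 := by push_cast; ring
  have hE0pos : 0 < Efun m t 0 := by rw [Efun_zero m t ht1]; positivity
  have hfd := ffun_hasDeriv m t ht1
  have hL := LC_neg m hm t ht1 htb
  have hmono : 𝓝[>] (0:ℝ) ≤ 𝓝[≠] (0:ℝ) :=
    nhdsWithin_mono 0 (fun x hx => ne_of_gt hx)
  have hslope := hasDerivAt_iff_tendsto_slope.mp hfd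
  have h1 : ∀ᶠ w in 𝓝[>] (0:ℝ), slope (ffun m t) 0 w < 0 :=
    (hslope.mono_left hmono).eventually_lt_const hL
  have h2 : ∀ᶠ w in 𝓝[>] (0:ℝ), 0 < Efun m t w :=
    (((Efun_hasDeriv m t).continuousAt.tendsto).mono_left nhdsWithin_le_nhds).eventually_const_lt
      hE0pos
  have h3 : ∀ᶠ w in 𝓝[>] (0:ℝ), w < 1 :=
    (eventually_lt_nhds zero_lt_one).filter_mono nhdsWithin_le_nhds
  have h4 : ∀ᶠ w in 𝓝[>] (0:ℝ), 0 < w :=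
    Filter.eventually_of_mem self_mem_nhdsWithin (fun x hx => hx)
  obtain ⟨w, hs1, hs2, hs3, hs4⟩ := (h1.and (h2.and (h3.and h4))).exists
  refine ⟨pwDes m w, pw_design m hm w hs4.le hs3.le, ?_, ?_⟩
  · rw [Hpw_Kmat m hm t w]
    apply Kmat_isUnit_det
    · have : 0 < (1-w)*alphaC m := by
        apply mul_pos _ hα
        linarith
      exact ne_of_gt this
    · rw [hcast]
      have hEw : (1-w)*alphaC m
          + (2*(m:ℝ)+1)*((1-w)*alphaC m + w - t*((1-w)*cC m + w)^2) = Efun m t w := rfl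
      rw [hEw]
      exact ne_of_gt hs2
  · have hAw : (1-w)*alphaC m ≠ 0 := by
      have : 0 < (1-w)*alphaC m := by
        apply mul_pos _ hα
        linarith
      exact ne_of_gt this
    have htrw : Matrix.trace ((HmatB t (pwDes m w))⁻¹) = ffun m t w := by
      rw [Hpw_Kmat m hm t w, Kmat_trace_inv _ _ _ hAw (by
        rw [hcast]
        exact ne_of_gt hs2)]
      rw [ffun, Efun, hcast]
      push_cast
      ring_nf
    have hHstar : HmatB t (fun S : Finset (Fin (2*m+1)) =>
        if S.card = m + 1 then ((Nat.choose (2*m+1) (m+1) : ℝ))⁻¹ else 0)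
        = Kmat (2*m+1) (alphaC m) (gammaC m t) := by
      rw [gammaC]; exact Hstar_Kmat m (2*m+1) (m+1) hm rfl rfl t
    have hE0ne : alphaC m + ((2*m+1:ℕ):ℝ)*gammaC m t ≠ 0 := by
      rw [hcast, sc_E0 m t ht1]
      positivity
    have htr0 : Matrix.trace ((HmatB t (fun S : Finset (Fin (2*m+1)) =>
        if S.card = m + 1 then ((Nat.choose (2*m+1) (m+1) : ℝ))⁻¹ else 0))⁻¹) = ffun m t 0 := by
      rw [hHstar, Kmat_trace_inv _ _ _ (ne_of_gt hα) hE0ne]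
      rw [ffun, Efun, gammaC, hcast]
      push_cast
      ring_nf
    rw [htrw, htr0]
    rw [slope_def_field, sub_zero] at hs1
    rcases div_neg_iff.mp hs1 with ⟨hn, hd⟩ | ⟨hn, hd⟩
    · linarith
    · linarith


end

theorem statement_15 (m : ℕ) (hm : 1 ≤ m) (t : ℝ) (ht0 : 0 ≤ t) (ht1 : t < 1) :
    (IsUnit (HmatB t (fun S : Finset (Fin (2*m+1)) =>
          if S.card = m + 1 then ((Nat.choose (2*m+1) (m+1) : ℝ))⁻¹ else 0)).det
      ∧ ∀ p : Finset (Fin (2*m+1)) → ℝ, designMeasureB p → IsUnit (HmatB t p).det →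
          Matrix.trace ((HmatB t (fun S : Finset (Fin (2*m+1)) =>
              if S.card = m + 1 then ((Nat.choose (2*m+1) (m+1) : ℝ))⁻¹ else 0))⁻¹)
            ≤ Matrix.trace ((HmatB t p)⁻¹))
    ↔ (0 ≤ t ∧ t ≤ (2*m+1 : ℝ) / ((2*m+1 : ℝ) + 1)) := by
  have hm1 : (1:ℝ) ≤ (m:ℝ) := by exact_mod_cast hm
  constructor
  · rintro ⟨hdet, hopt⟩
    refine ⟨ht0, ?_⟩
    by_contra htb
    push_neg at htb
    obtain ⟨p, hp, hpdet, hlt⟩ := converse_exists m hm t ht0 ht1 htb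
    have := hopt p hp hpdet
    linarith
  · rintro ⟨_, htb⟩
    constructor
    · have hHstar : HmatB t (fun S : Finset (Fin (2*m+1)) =>
          if S.card = m + 1 then ((Nat.choose (2*m+1) (m+1) : ℝ))⁻¹ else 0)
          = Kmat (2*m+1) (alphaC m) (gammaC m t) := by
        rw [gammaC]; exact Hstar_Kmat m (2*m+1) (m+1) hm rfl rfl t
      rw [hHstar]
      apply Kmat_isUnit_det
      · have : (0:ℝ) < alphaC m := by rw [alphaC]; positivity
        exact ne_of_gt this
      · have hcast : ((2*m+1 : ℕ):ℝ) = 2*(m:ℝ)+1 := by push_cast; ring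
        rw [hcast, sc_E0 m t ht1]
        have hs : (0:ℝ) < 1 - t := by linarith
        positivity
    · intro p hp hpdet
      exact forward_opt m hm t ht0 ht1 htb p hp hpdet
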